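/- Let n ≥ 1 and let γ_p : ℝⁿ → ℝ be the scoring function of a property p. Suppose that for all e, f ∈ ℝⁿ, γ_p(e + f) > 0 holds if and only if γ_p(e) > 0 or γ_p(f) > 0 (the strict epistemic pooling principle for summation pooling on all of ℝⁿ). Then either γ_p(e) > 0 for every e ∈ ℝⁿ, or γ_p(e) ≤ 0 for every e ∈ ℝⁿ. -/
import Mathlib

/-- If the strict epistemic pooling principle holds for summation pooling
on all of ℝⁿ, then either every embedding satisfies p, or none does. -/
theorem sum_pooling_strict_trivial_on_univ (n : ℕ) (hn : 1 ≤ n)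
    (γ : (Fin n → ℝ) → ℝ)
    (hpool : ∀ e f : Fin n → ℝ, γ (e + f) > 0 ↔ (γ e > 0 ∨ γ f > 0)) :
    (∀ e : Fin n → ℝ, γ e > 0) ∨ (∀ e : Fin n → ℝ, γ e ≤ 0) := by
  by_cases h0 : γ 0 > 0
  · left
    intro e
    have := (hpool e 0).mpr (Or.inr h0)
    simpa using this
  · right
    intro e
    by_contra h
    push_neg at h
    have := (hpool e (-e)).mpr (Or.inl h)
    simp at this
    exact h0 this
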